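/- arXiv:1910.04653 — 2 statements merged into one kernel-verified Lean document; each statement's English description precedes it below -/
import Mathlib

section
/- (Multivariate Hensel's lemma over ℤ_p.) Let m ≥ 1, let f = (f_1, …, f_m) be an m-tuple of polynomials in ℤ_p[x_1, …, x_m], and for x ∈ ℤ_p^m let J_f(x) denote the m×m Jacobian matrix whose (i,k) entry is (∂f_i/∂x_k)(x). Suppose a ∈ ℤ_p^m satisfies ‖f_i(a)‖_p < ‖det J_f(a)‖_p^2 for all i = 1, …, m (equivalently, min_i ord_p(f_i(a)) > 2·ord_p(det J_f(a))). Then there exists a unique α ∈ ℤ_p^m such that f_i(α) = 0 for all i and ‖α_i − a_i‖_p < ‖det J_f(a)‖_p for all i. Moreover, this α satisfies ‖α_i − a_i‖_p · ‖det J_f(a)‖_p ≤ max_k ‖f_k(a)‖_p for all i. -/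
/-- The determinant of the Jacobian matrix of an `m`-tuple of polynomials
`f = (f_1, …, f_m)` in `ℤ_p[x_1, …, x_m]`, evaluated at the point `x ∈ ℤ_p^m`. -/
noncomputable def jacobianDet {p : ℕ} [Fact p.Prime] {m : ℕ}
    (f : Fin m → MvPolynomial (Fin m) ℤ_[p]) (x : Fin m → ℤ_[p]) : ℤ_[p] :=
  (Matrix.of fun i k => MvPolynomial.eval x (MvPolynomial.pderiv k (f i))).det

open MvPolynomial

namespace MVHensel

variable {p : ℕ} [Fact p.Prime] {m : ℕ}

lemma norm_le_of_mem_span {c : ℝ} (hc : 0 ≤ c) {S : Set ℤ_[p]} (hS : ∀ z ∈ S, ‖z‖ ≤ c)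
    {x : ℤ_[p]} (hx : x ∈ Submodule.span ℤ_[p] S) : ‖x‖ ≤ c := by
  induction hx using Submodule.span_induction with
  | mem z hz => exact hS z hz
  | zero => simpa using hc
  | add y z _ _ hy hz => exact le_trans (PadicInt.nonarchimedean _ _) (max_le hy hz)
  | smul r y _ hy =>
      have h1 : ‖r • y‖ = ‖r‖ * ‖y‖ := by rw [smul_eq_mul, norm_mul]
      rw [h1]
      exact le_trans (mul_le_of_le_one_left (norm_nonneg y) (PadicInt.norm_le_one r)) hy

lemma eval_sub_mem_span (g : MvPolynomial (Fin m) ℤ_[p]) (x y : Fin m → ℤ_[p]) :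
    eval x g - eval y g ∈ Submodule.span ℤ_[p] (Set.range fun k => x k - y k) := by
  induction g using MvPolynomial.induction_on with
  | C a => simp
  | add q r hq hr =>
      have := Submodule.add_mem _ hq hr
      simpa [map_add, add_sub_add_comm] using this
  | mul_X q i hq =>
      have h1 : eval x (q * X i) - eval y (q * X i)
          = (x i) • (eval x q - eval y q) + (eval y q) • (x i - y i) := by
        simp only [map_mul, eval_X, smul_eq_mul]
        ring
      rw [h1]
      exact Submodule.add_mem _ (Submodule.smul_mem _ _ hq)
        (Submodule.smul_mem _ _ (Submodule.subset_span ⟨i, rfl⟩))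

lemma norm_eval_sub_le (g : MvPolynomial (Fin m) ℤ_[p]) (x y : Fin m → ℤ_[p]) :
    ‖eval x g - eval y g‖ ≤ ‖x - y‖ := by
  refine norm_le_of_mem_span (norm_nonneg _) ?_ (eval_sub_mem_span g x y)
  rintro z ⟨k, rfl⟩
  simpa using norm_le_pi_norm (x - y) k

lemma taylor_mem_span (g : MvPolynomial (Fin m) ℤ_[p]) (x h : Fin m → ℤ_[p]) :
    eval (x + h) g - eval x g - ∑ k, eval x (pderiv k g) * h k ∈
      Submodule.span ℤ_[p] {z | ∃ i j, z = h i * h j} := by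
  induction g using MvPolynomial.induction_on with
  | C a => simp
  | add q r hq hr =>
      have hmem := Submodule.add_mem _ hq hr
      have e : eval (x + h) (q + r) - eval x (q + r) - ∑ k, eval x (pderiv k (q + r)) * h k
          = (eval (x + h) q - eval x q - ∑ k, eval x (pderiv k q) * h k)
            + (eval (x + h) r - eval x r - ∑ k, eval x (pderiv k r) * h k) := by
        simp only [map_add, add_mul, Finset.sum_add_distrib]
        ring
      rw [e]; exact hmem
  | mul_X q i hq =>
      have hsum2 : ∑ k, eval x (pderiv k (q * X i)) * h k
          = x i * (∑ k, eval x (pderiv k q) * h k) + eval x q * h i := by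
        have hterm : ∀ k : Fin m, eval x (pderiv k (q * X i)) * h k
            = x i * (eval x (pderiv k q) * h k) + eval x q * (if k = i then h k else 0) := by
          intro k
          rw [pderiv_mul, pderiv_X]
          by_cases hk : k = i
          · subst hk; simp; ring
          · simp [Pi.single_apply, hk]; ring
        rw [Finset.sum_congr rfl fun k _ => hterm k, Finset.sum_add_distrib, ← Finset.mul_sum,
          ← Finset.mul_sum]
        congr 1
        rw [Finset.sum_ite_eq' Finset.univ i h]
        simp
      have e : eval (x + h) (q * X i) - eval x (q * X i) - ∑ k, eval x (pderiv k (q * X i)) * h k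
          = x i • (eval (x + h) q - eval x q - ∑ k, eval x (pderiv k q) * h k)
            + (h i • (eval (x + h) q - eval x q - ∑ k, eval x (pderiv k q) * h k)
              + (∑ k, eval x (pderiv k q) * h k) * h i) := by
        rw [hsum2]
        simp only [map_mul, eval_X, Pi.add_apply, smul_eq_mul]
        ring
      rw [e]
      refine Submodule.add_mem _ (Submodule.smul_mem _ _ hq)
        (Submodule.add_mem _ (Submodule.smul_mem _ _ hq) ?_)
      rw [Finset.sum_mul]
      refine Submodule.sum_mem _ fun k _ => ?_
      rw [mul_assoc, ← smul_eq_mul]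
      exact Submodule.smul_mem _ _ (Submodule.subset_span ⟨k, i, rfl⟩)

lemma norm_taylor_le (g : MvPolynomial (Fin m) ℤ_[p]) (x h : Fin m → ℤ_[p]) :
    ‖eval (x + h) g - eval x g - ∑ k, eval x (pderiv k g) * h k‖ ≤ ‖h‖ ^ 2 := by
  refine norm_le_of_mem_span (by positivity) ?_ (taylor_mem_span g x h)
  rintro z ⟨i, j, rfl⟩
  rw [norm_mul, sq]
  exact mul_le_mul (norm_le_pi_norm h i) (norm_le_pi_norm h j) (norm_nonneg _) (norm_nonneg _)

variable {p : ℕ} [Fact p.Prime] {m : ℕ}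

noncomputable def pdiv (z d : ℤ_[p]) : ℤ_[p] :=
  if h : ‖(z : ℚ_[p]) / (d : ℚ_[p])‖ ≤ 1 then ⟨_, h⟩ else 0

lemma pdiv_spec {z d : ℤ_[p]} (hd : d ≠ 0) (h : ‖z‖ ≤ ‖d‖) :
    d * pdiv z d = z ∧ ‖pdiv z d‖ * ‖d‖ = ‖z‖ := by
  have hd' : (d : ℚ_[p]) ≠ 0 := by
    simpa using fun h0 => hd (Subtype.ext h0)
  have hdpos : (0:ℝ) < ‖d‖ := norm_pos_iff.mpr hd
  have hn : ‖(z : ℚ_[p]) / (d : ℚ_[p])‖ = ‖z‖ / ‖d‖ := by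
    rw [norm_div, PadicInt.norm_def, PadicInt.norm_def]
  have hle : ‖(z : ℚ_[p]) / (d : ℚ_[p])‖ ≤ 1 := by
    rw [hn]; exact div_le_one_of_le₀ h hdpos.le
  have hp : pdiv z d = ⟨_, hle⟩ := dif_pos hle
  rw [hp]
  constructor
  · refine Subtype.ext ?_
    show (d : ℚ_[p]) * ((z : ℚ_[p]) / (d : ℚ_[p])) = (z : ℚ_[p])
    field_simp
  · rw [PadicInt.norm_def]
    show ‖(z : ℚ_[p]) / (d : ℚ_[p])‖ * ‖d‖ = ‖z‖
    rw [hn]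
    exact div_mul_cancel₀ _ hdpos.ne'

lemma norm_mulVec_le (M : Matrix (Fin m) (Fin m) ℤ_[p]) (v : Fin m → ℤ_[p]) {c : ℝ}
    (hc : 0 ≤ c) (hM : ∀ i k, ‖M i k‖ ≤ c) (i : Fin m) : ‖M.mulVec v i‖ ≤ c * ‖v‖ := by
  rw [Matrix.mulVec, dotProduct]
  refine IsUltrametricDist.norm_sum_le_of_forall_le_of_nonneg (by positivity) fun k _ => ?_
  rw [norm_mul]
  exact mul_le_mul (hM i k) (norm_le_pi_norm v k) (norm_nonneg _) hc

lemma norm_mulVec_le' (M : Matrix (Fin m) (Fin m) ℤ_[p]) (v : Fin m → ℤ_[p]) (i : Fin m) :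
    ‖M.mulVec v i‖ ≤ ‖v‖ := by
  simpa using norm_mulVec_le M v zero_le_one (fun i k => PadicInt.norm_le_one _) i

lemma norm_eq_sup' (x : Fin m → ℤ_[p]) (hne : (Finset.univ : Finset (Fin m)).Nonempty) :
    ‖x‖ = Finset.univ.sup' hne fun i => ‖x i‖ := by
  refine le_antisymm ?_ (Finset.sup'_le _ _ fun i _ => norm_le_pi_norm x i)
  obtain ⟨i0, hi0⟩ := hne
  refine (pi_norm_le_iff_of_nonneg ?_).mpr
    fun i => Finset.le_sup' (fun j => ‖x j‖) (Finset.mem_univ i)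
  exact le_trans (norm_nonneg (x i0)) (Finset.le_sup' (fun j => ‖x j‖) hi0)

lemma exists_norm_apply_eq (x : Fin m → ℤ_[p]) (hne : (Finset.univ : Finset (Fin m)).Nonempty) :
    ∃ i, ‖x‖ = ‖x i‖ := by
  obtain ⟨i, _, hi⟩ := Finset.exists_mem_eq_sup' hne fun i => ‖x i‖
  exact ⟨i, by rw [norm_eq_sup' x hne, hi]⟩

lemma norm_eq_of_sub_lt {a b : ℤ_[p]} (h : ‖a - b‖ < ‖b‖) : ‖a‖ = ‖b‖ := by
  have h1 : ‖a‖ ≤ ‖b‖ := by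
    have h3 : a = (a - b) + b := by ring
    rw [h3]
    exact le_trans (PadicInt.nonarchimedean _ _) (max_le h.le le_rfl)
  rcases lt_or_eq_of_le h1 with h2 | h2
  · exfalso
    have h4 : b = a + (b - a) := by ring
    have : ‖b‖ ≤ max ‖a‖ ‖a - b‖ := by
      calc ‖b‖ = ‖a + (b - a)‖ := by rw [← h4]
        _ ≤ max ‖a‖ ‖b - a‖ := PadicInt.nonarchimedean a (b - a)
        _ = max ‖a‖ ‖a - b‖ := by rw [norm_sub_rev]
    rcases max_cases ‖a‖ ‖a - b‖ with ⟨he, _⟩ | ⟨he, _⟩ <;> rw [he] at this <;> linarith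
  · exact h2

lemma jacobianDet_eq_eval (f : Fin m → MvPolynomial (Fin m) ℤ_[p]) (x : Fin m → ℤ_[p]) :
    jacobianDet f x = eval x (Matrix.of fun i k => pderiv k (f i)).det := by
  rw [jacobianDet, RingHom.map_det]
  congr 1

lemma norm_jacobianDet_sub_le (f : Fin m → MvPolynomial (Fin m) ℤ_[p]) (x y : Fin m → ℤ_[p]) :
    ‖jacobianDet f x - jacobianDet f y‖ ≤ ‖x - y‖ := by
  rw [jacobianDet_eq_eval, jacobianDet_eq_eval]
  exact norm_eval_sub_le _ x y

lemma norm_sub_le_max (a b : ℤ_[p]) : ‖a - b‖ ≤ max ‖a‖ ‖b‖ := by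
  rw [sub_eq_add_neg]
  simpa using PadicInt.nonarchimedean a (-b)

lemma key (f : Fin m → MvPolynomial (Fin m) ℤ_[p]) (x α : Fin m → ℤ_[p])
    (hroot : ∀ i, eval α (f i) = 0) (i : Fin m) :
    ‖jacobianDet f x * (α i - x i)‖ ≤ max ‖fun j => eval x (f j)‖ (‖α - x‖ ^ 2) := by
  set h : Fin m → ℤ_[p] := α - x with hh
  set J : Matrix (Fin m) (Fin m) ℤ_[p] := Matrix.of fun i k => eval x (pderiv k (f i)) with hJ
  have hxh : x + h = α := by funext j; simp [hh]
  have hw : ∀ i, J.mulVec h i = -(eval x (f i))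
      - (eval (x + h) (f i) - eval x (f i) - ∑ k, eval x (pderiv k (f i)) * h k) := by
    intro i
    have h0 : eval (x + h) (f i) = 0 := by rw [hxh]; exact hroot i
    rw [Matrix.mulVec, dotProduct, h0]
    simp only [hJ, Matrix.of_apply]
    ring
  have hwn : ‖J.mulVec h‖ ≤ max ‖fun j => eval x (f j)‖ (‖h‖ ^ 2) := by
    have hn0 : (0:ℝ) ≤ max ‖fun j => eval x (f j)‖ (‖h‖ ^ 2) :=
      le_max_of_le_right (sq_nonneg _)
    refine (pi_norm_le_iff_of_nonneg hn0).mpr fun i => ?_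
    rw [hw i]
    refine le_trans (norm_sub_le_max _ _) (max_le_max ?_ (norm_taylor_le (f i) x h))
    rw [norm_neg]
    exact norm_le_pi_norm (fun j => eval x (f j)) i
  have hadj : J.det • h = J.adjugate.mulVec (J.mulVec h) := by
    rw [Matrix.mulVec_mulVec, Matrix.adjugate_mul, Matrix.smul_mulVec, Matrix.one_mulVec]
  calc ‖jacobianDet f x * (α i - x i)‖ = ‖(J.det • h) i‖ := by
        simp only [Pi.smul_apply, smul_eq_mul, hh, Pi.sub_apply]
        rfl
    _ = ‖J.adjugate.mulVec (J.mulVec h) i‖ := by rw [hadj]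
    _ ≤ ‖J.mulVec h‖ := norm_mulVec_le' _ _ i
    _ ≤ _ := hwn


lemma pi_nonarch (x y : Fin m → ℤ_[p]) : ‖x + y‖ ≤ max ‖x‖ ‖y‖ := by
  refine (pi_norm_le_iff_of_nonneg (le_max_of_le_left (norm_nonneg x))).mpr fun i => ?_
  exact le_trans (PadicInt.nonarchimedean _ _)
    (max_le_max (norm_le_pi_norm x i) (norm_le_pi_norm y i))

lemma uniq (f : Fin m → MvPolynomial (Fin m) ℤ_[p]) (a : Fin m → ℤ_[p])
    (hne : (Finset.univ : Finset (Fin m)).Nonempty) (hd : jacobianDet f a ≠ 0)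
    {α β : Fin m → ℤ_[p]}
    (hα : ∀ i, eval α (f i) = 0) (hβ : ∀ i, eval β (f i) = 0)
    (hαa : ∀ i, ‖α i - a i‖ < ‖jacobianDet f a‖)
    (hβa : ∀ i, ‖β i - a i‖ < ‖jacobianDet f a‖) : β = α := by
  set δ := ‖jacobianDet f a‖ with hδdef
  have hδ : 0 < δ := norm_pos_iff.mpr hd
  have hαn : ‖α - a‖ < δ := (pi_norm_lt_iff hδ).mpr fun i => by simpa using hαa i
  have hdα : ‖jacobianDet f α‖ = δ :=
    norm_eq_of_sub_lt (lt_of_le_of_lt (norm_jacobianDet_sub_le f α a) hαn)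
  have hβα : ‖β - α‖ < δ := by
    refine (pi_norm_lt_iff hδ).mpr fun i => ?_
    have h1 : β i - α i = (β i - a i) - (α i - a i) := by ring
    rw [Pi.sub_apply, h1]
    exact lt_of_le_of_lt (norm_sub_le_max _ _) (max_lt (hβa i) (hαa i))
  have hzero : ‖fun j => eval α (f j)‖ = 0 := by
    have : (fun j => eval α (f j)) = 0 := funext fun j => hα j
    rw [this, norm_zero]
  have hkey : ∀ i, δ * ‖(β - α) i‖ ≤ ‖β - α‖ ^ 2 := by
    intro i
    have := key f α β hβ i
    rw [norm_mul, hdα, hzero, max_eq_right (sq_nonneg _)] at this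
    simpa using this
  by_contra hne2
  have hpos : 0 < ‖β - α‖ := by
    rw [norm_pos_iff, sub_ne_zero]
    exact fun h => hne2 h
  obtain ⟨i0, hi0⟩ := exists_norm_apply_eq (β - α) hne
  have : δ * ‖β - α‖ ≤ ‖β - α‖ ^ 2 := by
    conv_lhs => rw [hi0]
    exact hkey i0
  nlinarith

lemma moreover (f : Fin m → MvPolynomial (Fin m) ℤ_[p]) (a : Fin m → ℤ_[p])
    (hne : (Finset.univ : Finset (Fin m)).Nonempty) (hd : jacobianDet f a ≠ 0)
    {α : Fin m → ℤ_[p]} (hα : ∀ i, eval α (f i) = 0)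
    (hαa : ∀ i, ‖α i - a i‖ < ‖jacobianDet f a‖) (i : Fin m) :
    ‖α i - a i‖ * ‖jacobianDet f a‖ ≤ ‖fun j => eval a (f j)‖ := by
  set δ := ‖jacobianDet f a‖ with hδdef
  set t := ‖fun j => eval a (f j)‖ with htdef
  have ht0 : (0:ℝ) ≤ t := norm_nonneg _
  have hδ : 0 < δ := norm_pos_iff.mpr hd
  have hαn : ‖α - a‖ < δ := (pi_norm_lt_iff hδ).mpr fun i => by simpa using hαa i
  have hkey : ∀ i, δ * ‖(α - a) i‖ ≤ max t (‖α - a‖ ^ 2) := by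
    intro i
    have := key f a α hα i
    rw [norm_mul] at this
    simpa using this
  by_cases hz : ‖α - a‖ = 0
  · have : ‖α i - a i‖ = 0 := by
      have h1 := norm_le_pi_norm (α - a) i
      rw [hz] at h1
      exact le_antisymm (by simpa using h1) (norm_nonneg _)
    rw [this, zero_mul]
    exact ht0
  · have hpos : 0 < ‖α - a‖ := lt_of_le_of_ne (norm_nonneg _) (Ne.symm hz)
    have hle : ‖α - a‖ ^ 2 ≤ t := by
      by_contra h'
      push_neg at h'
      obtain ⟨i0, hi0⟩ := exists_norm_apply_eq (α - a) hne
      have h2 := hkey i0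
      rw [← hi0, max_eq_right h'.le] at h2
      nlinarith
    have h3 := hkey i
    rw [max_eq_left hle] at h3
    rw [mul_comm]
    simpa using h3


set_option maxHeartbeats 2000000 in
lemma exists_root (f : Fin m → MvPolynomial (Fin m) ℤ_[p]) (a : Fin m → ℤ_[p]) (hm : 1 ≤ m)
    (ha : ∀ i, ‖eval a (f i)‖ < ‖jacobianDet f a‖ ^ 2) :
    ∃ α, (∀ i, eval α (f i) = 0) ∧ ∀ i, ‖α i - a i‖ < ‖jacobianDet f a‖ := by
  set d := jacobianDet f a with hddef
  set δ := ‖d‖ with hδdef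
  have hδ2pos : 0 < δ ^ 2 := lt_of_le_of_lt (norm_nonneg _) (ha ⟨0, hm⟩)
  have hδpos : 0 < δ := by nlinarith [norm_nonneg d]
  have hd0 : d ≠ 0 := norm_pos_iff.mp hδpos
  have hδ1 : δ ≤ 1 := PadicInt.norm_le_one d
  set F : (Fin m → ℤ_[p]) → (Fin m → ℤ_[p]) := fun x i => eval x (f i) with hFdef
  set t := ‖F a‖ with htdef
  have ht : t < δ ^ 2 := (pi_norm_lt_iff hδ2pos).mpr fun i => ha i
  have ht0 : (0:ℝ) ≤ t := norm_nonneg _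
  set r := t / δ ^ 2 with hrdef
  have hr0 : 0 ≤ r := div_nonneg ht0 hδ2pos.le
  have hr1 : r < 1 := (div_lt_one hδ2pos).mpr ht
  set J : Matrix (Fin m) (Fin m) ℤ_[p] := Matrix.of fun i k => eval a (pderiv k (f i)) with hJdef
  have hdet : J.det = d := rfl
  set step : (Fin m → ℤ_[p]) → (Fin m → ℤ_[p]) :=
    fun x => x + fun i => pdiv (-(J.adjugate.mulVec (F x) i)) d with hstepdef
  set seq : ℕ → (Fin m → ℤ_[p]) := fun n => step^[n] a with hseqdef
  -- main step estimate
  have main : ∀ x : Fin m → ℤ_[p], ‖F x‖ ≤ t →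
      ‖step x - x‖ * δ ≤ ‖F x‖ ∧ (‖x - a‖ ≤ t / δ → ‖F (step x)‖ ≤ ‖F x‖ * r) := by
    intro x hx1
    set h : Fin m → ℤ_[p] := fun i => pdiv (-(J.adjugate.mulVec (F x) i)) d with hhdef
    have hstepx : step x = x + h := rfl
    have hsub : step x - x = h := by rw [hstepx]; abel
    have hdiv : ∀ i, d * h i = -(J.adjugate.mulVec (F x) i)
        ∧ ‖h i‖ * δ = ‖J.adjugate.mulVec (F x) i‖ := by
      intro i
      have hle : ‖-(J.adjugate.mulVec (F x) i)‖ ≤ ‖d‖ := by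
        rw [norm_neg]
        refine le_trans (norm_mulVec_le' _ _ i) (le_trans hx1 (le_trans ht.le ?_))
        nlinarith
      obtain ⟨h1, h2⟩ := pdiv_spec hd0 hle
      exact ⟨h1, by rw [hhdef]; simpa [norm_neg] using h2⟩
    have hhi : ∀ i, ‖h i‖ * δ ≤ ‖F x‖ :=
      fun i => le_trans (le_of_eq (hdiv i).2) (norm_mulVec_le' _ _ i)
    have hhn : ‖h‖ ≤ ‖F x‖ / δ := by
      refine (pi_norm_le_iff_of_nonneg (div_nonneg (norm_nonneg _) hδpos.le)).mpr fun i => ?_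
      exact (le_div_iff₀ hδpos).mpr (hhi i)
    have hhδ : ‖h‖ * δ ≤ ‖F x‖ := by
      have := mul_le_mul_of_nonneg_right hhn hδpos.le
      rwa [div_mul_cancel₀ _ hδpos.ne'] at this
    refine ⟨by rw [hsub]; exact hhδ, fun hx2 => ?_⟩
    -- J h = -F x
    have h3 : d • h = -(J.adjugate.mulVec (F x)) := funext fun i => (hdiv i).1
    have hJh : J.mulVec h = -(F x) := by
      have h1 : d • J.mulVec h = d • (-(F x)) := by
        calc d • J.mulVec h = J.mulVec (d • h) := (Matrix.mulVec_smul J d h).symm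
          _ = J.mulVec (-(J.adjugate.mulVec (F x))) := by rw [h3]
          _ = -(J.mulVec (J.adjugate.mulVec (F x))) := by rw [Matrix.mulVec_neg]
          _ = -((J * J.adjugate).mulVec (F x)) := by rw [Matrix.mulVec_mulVec]
          _ = -(J.det • F x) := by
              rw [Matrix.mul_adjugate, Matrix.smul_mulVec, Matrix.one_mulVec]
          _ = d • (-(F x)) := by rw [hdet, smul_neg]
      funext i
      have h2 := congrFun h1 i
      simp only [Pi.smul_apply, smul_eq_mul] at h2
      exact mul_left_cancel₀ hd0 h2
    have hFs : ∀ i, F (step x) i = ((∑ k, eval x (pderiv k (f i)) * h k) - J.mulVec h i)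
        + (eval (x + h) (f i) - eval x (f i) - ∑ k, eval x (pderiv k (f i)) * h k) := by
      intro i
      rw [hJh]
      have he : F (step x) i = eval (x + h) (f i) := by rw [hstepx]
      rw [he]
      simp only [Pi.neg_apply, hFdef]
      ring
    have hbound : ∀ i, ‖F (step x) i‖ ≤ ‖F x‖ * r := by
      intro i
      have hC : ‖F x‖ * r = (t / δ) * (‖F x‖ / δ) := by
        rw [hrdef]; field_simp
      rw [hFs i]
      refine le_trans (PadicInt.nonarchimedean _ _) (max_le ?_ ?_)
      · have hrw : (∑ k, eval x (pderiv k (f i)) * h k) - J.mulVec h i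
            = ∑ k, (eval x (pderiv k (f i)) - eval a (pderiv k (f i))) * h k := by
          rw [Matrix.mulVec, dotProduct]
          simp only [hJdef, Matrix.of_apply, sub_mul]
          rw [Finset.sum_sub_distrib]
        rw [hrw, hC]
        refine IsUltrametricDist.norm_sum_le_of_forall_le_of_nonneg ?_ fun k _ => ?_
        · positivity
        · rw [norm_mul]
          refine mul_le_mul ?_ ?_ (norm_nonneg _) (by positivity)
          · exact le_trans (norm_eval_sub_le _ x a) hx2
          · exact le_trans (norm_le_pi_norm h k) hhn
      · refine le_trans (norm_taylor_le (f i) x h) ?_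
        rw [hC, sq]
        refine mul_le_mul (le_trans hhn ?_) hhn (norm_nonneg _) (by positivity)
        gcongr
    exact (pi_norm_le_iff_of_nonneg (mul_nonneg (norm_nonneg _) hr0)).mpr hbound
  -- invariant
  have hinv : ∀ n, ‖F (seq n)‖ ≤ t * r ^ n ∧ ‖seq n - a‖ ≤ t / δ := by
    intro n
    induction n with
    | zero =>
        constructor
        · simp [hseqdef, htdef]
        · simp only [hseqdef, Function.iterate_zero, id_eq, sub_self, norm_zero]
          positivity
    | succ n ih =>
        have hs : seq (n + 1) = step (seq n) := Function.iterate_succ_apply' step n a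
        have hFn : ‖F (seq n)‖ ≤ t := by
          refine le_trans ih.1 ?_
          nlinarith [pow_le_one₀ hr0 hr1.le (n := n)]
        obtain ⟨hstep1, hstep2⟩ := main (seq n) hFn
        have hstep2' := hstep2 ih.2
        constructor
        · rw [hs]
          calc ‖F (step (seq n))‖ ≤ ‖F (seq n)‖ * r := hstep2'
            _ ≤ (t * r ^ n) * r := mul_le_mul_of_nonneg_right ih.1 hr0
            _ = t * r ^ (n + 1) := by ring
        · rw [hs]
          have h1 : ‖step (seq n) - seq n‖ ≤ t / δ := by
            rw [le_div_iff₀ hδpos]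
            exact le_trans hstep1 hFn
          have h2 : step (seq n) - a = (step (seq n) - seq n) + (seq n - a) := by abel
          rw [h2]
          exact le_trans (pi_nonarch _ _) (max_le h1 ih.2)
  -- Cauchy
  have hdist : ∀ n, dist (seq n) (seq (n + 1)) ≤ (t / δ) * r ^ n := by
    intro n
    have hs : seq (n + 1) = step (seq n) := Function.iterate_succ_apply' step n a
    have hFn : ‖F (seq n)‖ ≤ t * r ^ n := (hinv n).1
    have hFt : ‖F (seq n)‖ ≤ t := by
      refine le_trans hFn ?_
      nlinarith [pow_le_one₀ hr0 hr1.le (n := n)]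
    obtain ⟨hstep1, _⟩ := main (seq n) hFt
    rw [dist_eq_norm, norm_sub_rev, hs]
    refine le_trans ((le_div_iff₀ hδpos).mpr hstep1) ?_
    have heq : t / δ * r ^ n = (t * r ^ n) / δ := by ring
    rw [heq]
    gcongr
  have hcauchy : CauchySeq seq := cauchySeq_of_le_geometric r (t / δ) hr1 hdist
  obtain ⟨α, hα⟩ := cauchySeq_tendsto_of_complete hcauchy
  have hdiff : Filter.Tendsto (fun n => ‖α - seq n‖) Filter.atTop (nhds 0) := by
    have h1 : Filter.Tendsto (fun n => dist (seq n) α) Filter.atTop (nhds 0) :=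
      tendsto_iff_dist_tendsto_zero.mp hα
    simpa [dist_eq_norm, norm_sub_rev] using h1
  have hgeo : Filter.Tendsto (fun n : ℕ => t * r ^ n) Filter.atTop (nhds 0) := by
    have := (tendsto_pow_atTop_nhds_zero_of_lt_one hr0 hr1).const_mul t
    simpa using this
  refine ⟨α, fun i => ?_, fun i => ?_⟩
  · -- root
    have hb : ∀ n, ‖eval α (f i)‖ ≤ max ‖α - seq n‖ (t * r ^ n) := by
      intro n
      have he : eval α (f i) = (eval α (f i) - eval (seq n) (f i)) + eval (seq n) (f i) := by ring
      rw [he]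
      refine le_trans (PadicInt.nonarchimedean _ _) (max_le_max ?_ ?_)
      · exact norm_eval_sub_le _ α (seq n)
      · exact le_trans (norm_le_pi_norm (F (seq n)) i) (hinv n).1
    have hmax : Filter.Tendsto (fun n => max ‖α - seq n‖ (t * r ^ n)) Filter.atTop (nhds 0) := by
      have := hdiff.max hgeo
      simpa using this
    have hle : ‖eval α (f i)‖ ≤ 0 :=
      le_of_tendsto_of_tendsto' tendsto_const_nhds hmax hb
    have : ‖eval α (f i)‖ = 0 := le_antisymm hle (norm_nonneg _)
    exact norm_eq_zero.mp this
  · -- closeness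
    have hlim : Filter.Tendsto (fun n => ‖seq n - a‖) Filter.atTop (nhds ‖α - a‖) := by
      exact ((hα.sub_const a).norm)
    have h1 : ‖α - a‖ ≤ t / δ := le_of_tendsto' hlim fun n => (hinv n).2
    have h2 : t / δ < δ := by
      rw [div_lt_iff₀ hδpos]
      nlinarith
    calc ‖α i - a i‖ ≤ ‖α - a‖ := by
          simpa using norm_le_pi_norm (α - a) i
      _ ≤ t / δ := h1
      _ < δ := h2


end MVHensel

/-- **Multivariate Hensel's lemma over `ℤ_p`.** Let `f = (f_1, …, f_m)` be an `m`-tuple of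
polynomials in `ℤ_p[x_1, …, x_m]` (`m ≥ 1`) and suppose `a ∈ ℤ_p^m` satisfies
`‖f_i(a)‖ < ‖det J_f(a)‖²` for all `i`. Then there exists a unique `α ∈ ℤ_p^m` with
`f(α) = 0` and `‖α_i − a_i‖ < ‖det J_f(a)‖` for all `i`; moreover this `α` satisfies
`‖α_i − a_i‖ · ‖det J_f(a)‖ ≤ max_k ‖f_k(a)‖` for all `i`. -/
theorem multivariate_hensel (p : ℕ) [Fact p.Prime] (m : ℕ) (hm : 1 ≤ m)
    (f : Fin m → MvPolynomial (Fin m) ℤ_[p]) (a : Fin m → ℤ_[p])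
    (ha : ∀ i, ‖MvPolynomial.eval a (f i)‖ < ‖jacobianDet f a‖ ^ 2) :
    (∃! α : Fin m → ℤ_[p],
        (∀ i, MvPolynomial.eval α (f i) = 0) ∧
          ∀ i, ‖α i - a i‖ < ‖jacobianDet f a‖) ∧
      ∀ α : Fin m → ℤ_[p],
        ((∀ i, MvPolynomial.eval α (f i) = 0) ∧
            ∀ i, ‖α i - a i‖ < ‖jacobianDet f a‖) →
          ∀ i, ‖α i - a i‖ * ‖jacobianDet f a‖ ≤
            Finset.univ.sup' (Finset.univ_nonempty_iff.mpr ⟨⟨0, hm⟩⟩)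
              (fun k => ‖MvPolynomial.eval a (f k)‖) := by
  have hne : (Finset.univ : Finset (Fin m)).Nonempty := Finset.univ_nonempty_iff.mpr ⟨⟨0, hm⟩⟩
  have hd0 : jacobianDet f a ≠ 0 := by
    intro h
    have h1 := ha ⟨0, hm⟩
    rw [h, norm_zero] at h1
    simpa using lt_of_le_of_lt (norm_nonneg _) h1
  obtain ⟨α, hroot, hclose⟩ := MVHensel.exists_root f a hm ha
  constructor
  · exact ⟨α, ⟨hroot, hclose⟩, fun β hβ => MVHensel.uniq f a hne hd0 hroot hβ.1 hclose hβ.2⟩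
  · intro β hβ i
    refine le_trans (MVHensel.moreover f a hne hd0 hβ.1 hβ.2 i) ?_
    exact le_of_eq (MVHensel.norm_eq_sup' (fun j => eval a (f j)) hne)
end

section
/- (Newton iteration convergence for the multivariate Hensel's lemma.) Let m ≥ 1, let f = (f_1, …, f_m) ∈ ℤ_p[x_1, …, x_m]^m, and let a ∈ ℤ_p^m satisfy ord_p(f(a)) > 2·ord_p(det J_f(a)), where J_f denotes the Jacobian matrix of f. Define the Newton sequence by a_1 = a and a_{N+1} = a_N − J_f(a_N)^{-1} f(a_N) (viewing f(a_N) as a column vector). Then: (1) the sequence is well defined, i.e. for every N one has a_N ∈ ℤ_p^m and ‖det J_f(a_N)‖_p = ‖det J_f(a)‖_p ≠ 0; and (2) if α ∈ ℤ_p^m denotes the unique root of f with ord_p(α − a) > ord_p(det J_f(a)), then for every N ≥ 1 one has ord_p(α − a_N) ≥ ord_p(det J_f(a)) + 2^{N−1}·(ord_p(f(a)) − 2·ord_p(det J_f(a))); in particular the sequence (a_N) converges to α. -/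
/-- The Jacobian matrix of an `m`-tuple of polynomials `f = (f_1, …, f_m)` in
`ℤ_p[x_1, …, x_m]`, evaluated at a point `x ∈ ℚ_p^m`. -/
noncomputable def jacobianQ {p : ℕ} [Fact p.Prime] {m : ℕ}
    (f : Fin m → MvPolynomial (Fin m) ℤ_[p]) (x : Fin m → ℚ_[p]) :
    Matrix (Fin m) (Fin m) ℚ_[p] :=
  Matrix.of fun i k => MvPolynomial.aeval x (MvPolynomial.pderiv k (f i))

open MvPolynomial IsUltrametricDist


namespace NewtonHensel

variable {p : ℕ} [Fact p.Prime] {m : ℕ}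

lemma aeval_coe (g : MvPolynomial (Fin m) ℤ_[p]) (x : Fin m → ℤ_[p]) :
    aeval (fun i => (x i : ℚ_[p])) g = ((eval x g : ℤ_[p]) : ℚ_[p]) := by
  have := MvPolynomial.eval₂_comp_left (algebraMap ℤ_[p] ℚ_[p]) (RingHom.id ℤ_[p]) x g
  simp only [RingHom.comp_id] at this
  rw [MvPolynomial.aeval_def]
  exact (this.symm.trans (by rfl)).symm ▸ rfl

lemma aeval_le_one (g : MvPolynomial (Fin m) ℤ_[p]) {x : Fin m → ℚ_[p]}
    (hx : ∀ i, ‖x i‖ ≤ 1) : ‖aeval x g‖ ≤ 1 := by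
  induction g using MvPolynomial.induction_on with
  | C r =>
      have : ‖(r : ℚ_[p])‖ ≤ 1 := by rw [← PadicInt.norm_def]; exact r.norm_le_one
      simpa [MvPolynomial.aeval_C] using this
  | add f g hf hg =>
      rw [map_add]
      exact (norm_add_le_max _ _).trans (max_le hf hg)
  | mul_X f n hf =>
      rw [map_mul, aeval_X, norm_mul]
      exact mul_le_one₀ hf (norm_nonneg _) (hx n)

lemma taylor_bound (g : MvPolynomial (Fin m) ℤ_[p]) {x y : Fin m → ℚ_[p]} {c : ℝ}
    (hx : ∀ i, ‖x i‖ ≤ 1) (hc0 : 0 ≤ c) (hc1 : c ≤ 1) (hxy : ∀ k, ‖y k - x k‖ ≤ c) :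
    ‖aeval y g - aeval x g - ∑ k, aeval x (pderiv k g) * (y k - x k)‖ ≤ c ^ 2 := by
  have hy : ∀ i, ‖y i‖ ≤ 1 := by
    intro i
    have : y i = x i + (y i - x i) := by ring
    rw [this]
    exact (norm_add_le_max _ _).trans (max_le (hx i) ((hxy i).trans hc1))
  induction g using MvPolynomial.induction_on with
  | C r => simp [pow_nonneg hc0]
  | add f g hf hg =>
      have key : aeval y (f + g) - aeval x (f + g) -
          ∑ k, aeval x (pderiv k (f + g)) * (y k - x k)
          = (aeval y f - aeval x f - ∑ k, aeval x (pderiv k f) * (y k - x k))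
            + (aeval y g - aeval x g - ∑ k, aeval x (pderiv k g) * (y k - x k)) := by
        simp only [map_add, add_mul, Finset.sum_add_distrib]
        ring
      rw [key]
      exact (norm_add_le_max _ _).trans (max_le hf hg)
  | mul_X g n hg =>
      have hsum : ∑ k, aeval x (pderiv k (g * X n)) * (y k - x k)
          = (∑ k, aeval x (pderiv k g) * (y k - x k)) * x n + aeval x g * (y n - x n) := by
        have hterm : ∀ k : Fin m, aeval x (pderiv k (g * X n)) * (y k - x k)
            = aeval x (pderiv k g) * (y k - x k) * x n
              + aeval x g * (if k = n then y n - x n else 0) := by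
          intro k
          rw [pderiv_mul]
          by_cases hk : k = n
          · subst hk; simp [pderiv_X, Pi.single_apply]; ring
          · simp [pderiv_X, Pi.single_apply, hk]; ring
        rw [Finset.sum_congr rfl fun k _ => hterm k, Finset.sum_add_distrib,
          ← Finset.sum_mul, ← Finset.mul_sum]
        congr 1
        rw [Finset.sum_ite_eq' Finset.univ n (fun _ => y n - x n)]
        simp
      have key : aeval y (g * X n) - aeval x (g * X n) -
          ∑ k, aeval x (pderiv k (g * X n)) * (y k - x k)
          = (∑ k, aeval x (pderiv k g) * (y k - x k)) * (y n - x n)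
            + (aeval y g - aeval x g - ∑ k, aeval x (pderiv k g) * (y k - x k)) * y n := by
        rw [hsum, map_mul, map_mul, aeval_X, aeval_X]
        ring
      rw [key]
      refine (norm_add_le_max _ _).trans (max_le ?_ ?_)
      · rw [norm_mul]
        have hL : ‖∑ k, aeval x (pderiv k g) * (y k - x k)‖ ≤ c := by
          refine norm_sum_le_of_forall_le_of_nonneg hc0 fun k _ => ?_
          rw [norm_mul]
          calc ‖aeval x (pderiv k g)‖ * ‖y k - x k‖ ≤ 1 * c :=
                mul_le_mul (aeval_le_one _ hx) (hxy k) (norm_nonneg _) zero_le_one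
            _ = c := one_mul c
        calc ‖∑ k, aeval x (pderiv k g) * (y k - x k)‖ * ‖y n - x n‖ ≤ c * c :=
              mul_le_mul hL (hxy n) (norm_nonneg _) hc0
          _ = c ^ 2 := (sq c).symm
      · rw [norm_mul]
        calc ‖aeval y g - aeval x g - ∑ k, aeval x (pderiv k g) * (y k - x k)‖ * ‖y n‖
            ≤ c ^ 2 * 1 := mul_le_mul hg (hy n) (norm_nonneg _) (pow_nonneg hc0 2)
          _ = c ^ 2 := mul_one _

lemma lipschitz_bound (g : MvPolynomial (Fin m) ℤ_[p]) {x y : Fin m → ℚ_[p]} {c : ℝ}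
    (hx : ∀ i, ‖x i‖ ≤ 1) (hc0 : 0 ≤ c) (hc1 : c ≤ 1) (hxy : ∀ k, ‖y k - x k‖ ≤ c) :
    ‖aeval y g - aeval x g‖ ≤ c := by
  have hT := taylor_bound g hx hc0 hc1 hxy
  have key : aeval y g - aeval x g =
      (aeval y g - aeval x g - ∑ k, aeval x (pderiv k g) * (y k - x k))
      + ∑ k, aeval x (pderiv k g) * (y k - x k) := by ring
  rw [key]
  refine (norm_add_le_max _ _).trans (max_le ?_ ?_)
  · exact hT.trans (by nlinarith)
  · refine norm_sum_le_of_forall_le_of_nonneg hc0 fun k _ => ?_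
    rw [norm_mul]
    calc ‖aeval x (pderiv k g)‖ * ‖y k - x k‖ ≤ 1 * c :=
          mul_le_mul (aeval_le_one _ hx) (hxy k) (norm_nonneg _) zero_le_one
      _ = c := one_mul c

lemma det_le_one (M : Matrix (Fin m) (Fin m) ℚ_[p]) (h : ∀ i j, ‖M i j‖ ≤ 1) :
    ‖M.det‖ ≤ 1 := by
  rw [Matrix.det_apply]
  refine norm_sum_le_of_forall_le_of_nonneg zero_le_one fun σ _ => ?_
  have h1 : ‖∏ i, M (σ i) i‖ ≤ 1 := by
    rw [norm_prod]
    exact Finset.prod_le_one (fun i _ => norm_nonneg _) fun i _ => h _ _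
  rcases Int.units_eq_one_or (Equiv.Perm.sign σ) with hs | hs <;>
    simpa [hs] using h1

lemma adjugate_le_one (M : Matrix (Fin m) (Fin m) ℚ_[p]) (h : ∀ i j, ‖M i j‖ ≤ 1)
    (i j : Fin m) : ‖M.adjugate i j‖ ≤ 1 := by
  rw [Matrix.adjugate_apply]
  refine det_le_one _ fun i' j' => ?_
  rw [Matrix.updateRow_apply]
  split
  · rcases eq_or_ne i j' with h' | h' <;> simp [Pi.single_apply, h']
  · exact h i' j'

lemma inv_mulVec_bound (M : Matrix (Fin m) (Fin m) ℚ_[p]) (h : ∀ i j, ‖M i j‖ ≤ 1)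
    (hdet : M.det ≠ 0) {v : Fin m → ℚ_[p]} {b : ℝ} (hb : 0 ≤ b) (hv : ∀ j, ‖v j‖ ≤ b)
    (i : Fin m) : ‖M⁻¹.mulVec v i‖ ≤ b / ‖M.det‖ := by
  rw [Matrix.inv_def, Ring.inverse_eq_inv']
  have : ((M.det)⁻¹ • M.adjugate).mulVec v i = (M.det)⁻¹ * (M.adjugate.mulVec v i) := by
    rw [Matrix.smul_mulVec]; rfl
  rw [this, norm_mul, norm_inv]
  rw [div_eq_inv_mul]
  refine mul_le_mul le_rfl ?_ (norm_nonneg _) (by positivity)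
  show ‖∑ j, M.adjugate i j * v j‖ ≤ b
  refine norm_sum_le_of_forall_le_of_nonneg hb fun j _ => ?_
  rw [norm_mul]
  calc ‖M.adjugate i j‖ * ‖v j‖ ≤ 1 * b :=
        mul_le_mul (adjugate_le_one M h i j) (hv j) (norm_nonneg _) zero_le_one
    _ = b := one_mul b


lemma norm_sub_le_max (x y : ℚ_[p]) : ‖x - y‖ ≤ max ‖x‖ ‖y‖ := by
  rw [sub_eq_add_neg]
  simpa using IsUltrametricDist.norm_add_le_max x (-y)

lemma norm_eq_of_sub_lt {x y : ℚ_[p]} (h : ‖x - y‖ < ‖y‖) : ‖x‖ = ‖y‖ := by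
  have hne : ‖y‖ ≠ ‖x - y‖ := ne_of_gt h
  have hxy : x = y + (x - y) := by ring
  rw [hxy, IsUltrametricDist.norm_add_eq_max_of_norm_ne_norm hne, max_eq_left h.le]

lemma detQ_eq (f : Fin m → MvPolynomial (Fin m) ℤ_[p]) (x : Fin m → ℚ_[p]) :
    (jacobianQ f x).det
      = aeval x (Matrix.of fun i k => MvPolynomial.pderiv k (f i)).det := by
  have := RingHom.map_det
    ((aeval x : MvPolynomial (Fin m) ℤ_[p] →ₐ[ℤ_[p]] ℚ_[p]) : MvPolynomial (Fin m) ℤ_[p] →+* ℚ_[p])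
    (Matrix.of fun i k => MvPolynomial.pderiv k (f i))
  exact this.symm ▸ rfl

lemma detZ_eq (f : Fin m → MvPolynomial (Fin m) ℤ_[p]) (x : Fin m → ℤ_[p]) :
    jacobianDet f x
      = MvPolynomial.eval x (Matrix.of fun i k => MvPolynomial.pderiv k (f i)).det := by
  have := RingHom.map_det
    ((eval x : MvPolynomial (Fin m) ℤ_[p] →+* ℤ_[p]))
    (Matrix.of fun i k => MvPolynomial.pderiv k (f i))
  exact this.symm ▸ rfl

end NewtonHensel

/-- **Newton iteration convergence for the multivariate Hensel's lemma.**
Let `f = (f_1, …, f_m) ∈ ℤ_p[x_1, …, x_m]^m` (`m ≥ 1`) and let `a ∈ ℤ_p^m` satisfy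
`max_i ‖f_i(a)‖ < ‖det J_f(a)‖²` (i.e. `ord_p(f(a)) > 2·ord_p(det J_f(a))`). Let
`(a_N)_{N ≥ 1}` be the Newton sequence, `a_1 = a` and `a_{N+1} = a_N − J_f(a_N)⁻¹ f(a_N)`.
Then (1) the sequence is well defined: each `a_N` lies in `ℤ_p^m` and
`‖det J_f(a_N)‖ = ‖det J_f(a)‖ ≠ 0`; and (2) if `α ∈ ℤ_p^m` is the unique root of `f` with
`‖α_i − a_i‖ < ‖det J_f(a)‖` for all `i`, then for every `N ≥ 1`,
`‖α_i − (a_N)_i‖ ≤ ‖det J_f(a)‖ · (max_k ‖f_k(a)‖ / ‖det J_f(a)‖²) ^ (2^(N−1))`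
(the norm form of `ord_p(α − a_N) ≥ ord_p(det J_f(a)) +
2^(N−1)·(ord_p(f(a)) − 2·ord_p(det J_f(a)))`); in particular `a_N → α`. -/
theorem newton_iteration_hensel (p : ℕ) [Fact p.Prime] (m : ℕ) (hm : 1 ≤ m)
    (f : Fin m → MvPolynomial (Fin m) ℤ_[p]) (a : Fin m → ℤ_[p])
    (ha : ∀ i, ‖MvPolynomial.eval a (f i)‖ < ‖jacobianDet f a‖ ^ 2)
    (seq : ℕ → Fin m → ℚ_[p])
    (hseq_one : seq 1 = fun i => (a i : ℚ_[p]))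
    (hseq_rec : ∀ N, 1 ≤ N → seq (N + 1) =
      seq N - (jacobianQ f (seq N))⁻¹.mulVec (fun i => MvPolynomial.aeval (seq N) (f i))) :
    (∀ N, 1 ≤ N → (∀ i, ‖seq N i‖ ≤ 1) ∧
        ‖(jacobianQ f (seq N)).det‖ = ‖jacobianDet f a‖ ∧ jacobianDet f a ≠ 0) ∧
      ∀ α : Fin m → ℤ_[p],
        (∀ i, MvPolynomial.eval α (f i) = 0) →
        (∀ i, ‖α i - a i‖ < ‖jacobianDet f a‖) →
        (∀ N, 1 ≤ N → ∀ i, ‖(α i : ℚ_[p]) - seq N i‖ ≤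
            ‖jacobianDet f a‖ *
              ((Finset.univ.sup' (Finset.univ_nonempty_iff.mpr ⟨⟨0, hm⟩⟩)
                  (fun k => ‖MvPolynomial.eval a (f k)‖)) / ‖jacobianDet f a‖ ^ 2)
                ^ 2 ^ (N - 1)) ∧
          Filter.Tendsto seq Filter.atTop (nhds fun i => (α i : ℚ_[p])) := by
  classical
  have i0 : Fin m := ⟨0, hm⟩
  set D : MvPolynomial (Fin m) ℤ_[p] := (Matrix.of fun i k => MvPolynomial.pderiv k (f i)).det
    with hD
  have hdetZ : jacobianDet f a = MvPolynomial.eval a D := NewtonHensel.detZ_eq f a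
  have hdetQ : ∀ x : Fin m → ℚ_[p], (jacobianQ f x).det = MvPolynomial.aeval x D :=
    fun x => NewtonHensel.detQ_eq f x
  set δ := ‖jacobianDet f a‖ with hδ
  have hdet0 : jacobianDet f a ≠ 0 := by
    intro h
    have h1 := ha i0
    have hδ0 : δ = 0 := by rw [hδ, h, norm_zero]
    rw [hδ0] at h1
    have h2 : (0:ℝ) ≤ ‖MvPolynomial.eval a (f i0)‖ := norm_nonneg _
    nlinarith
  have hδpos : 0 < δ := norm_pos_iff.mpr hdet0
  have hδ1 : δ ≤ 1 := PadicInt.norm_le_one _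
  set A0 : Fin m → ℚ_[p] := fun i => (a i : ℚ_[p]) with hA0
  have hA0le : ∀ i, ‖A0 i‖ ≤ 1 := by
    intro i; rw [hA0]; simp only; rw [← PadicInt.norm_def]; exact (a i).norm_le_one
  have hvalA0 : ∀ i, MvPolynomial.aeval A0 (f i) = ((MvPolynomial.eval a (f i) : ℤ_[p]) : ℚ_[p]) :=
    fun i => NewtonHensel.aeval_coe (f i) a
  have haevalA0D : MvPolynomial.aeval A0 D = ((jacobianDet f a : ℤ_[p]) : ℚ_[p]) := by
    rw [hdetZ]; exact NewtonHensel.aeval_coe D a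
  have hnormA0D : ‖MvPolynomial.aeval A0 D‖ = δ := by
    rw [haevalA0D, ← PadicInt.norm_def]
  set M0 := Finset.univ.sup' (Finset.univ_nonempty_iff.mpr ⟨⟨0, hm⟩⟩)
    (fun k => ‖MvPolynomial.eval a (f k)‖) with hM0
  have hM0le : ∀ k, ‖MvPolynomial.eval a (f k)‖ ≤ M0 := by
    intro k; rw [hM0]
    exact Finset.le_sup' (fun j => ‖MvPolynomial.eval a (f j)‖) (Finset.mem_univ k)
  have hM0nonneg : 0 ≤ M0 := (norm_nonneg _).trans (hM0le i0)
  have hM0lt : M0 < δ ^ 2 := by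
    rw [hM0]
    refine (Finset.sup'_lt_iff _).mpr fun k _ => ha k
  set t := M0 / δ ^ 2 with htdef
  have ht0 : 0 ≤ t := div_nonneg hM0nonneg (sq_nonneg δ)
  have ht1 : t < 1 := (div_lt_one (by nlinarith)).mpr hM0lt
  have hδt1 : δ * t ≤ 1 := mul_le_one₀ hδ1 ht0 ht1.le
  have hδ2t : δ ^ 2 * t = M0 := by rw [htdef]; field_simp [hδpos.ne']
  have hδt : δ * t = M0 / δ := by rw [htdef]; field_simp [hδpos.ne']
  clear_value D δ A0 M0 t
  -- properties preserved at any point close to A0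
  have step_props : ∀ x : Fin m → ℚ_[p], (∀ i, ‖x i - A0 i‖ ≤ δ * t) →
      (∀ i, ‖x i‖ ≤ 1) ∧ ‖(jacobianQ f x).det‖ = δ := by
    intro x hx
    have hxle : ∀ i, ‖x i‖ ≤ 1 := by
      intro i
      have hxi : x i = A0 i + (x i - A0 i) := by ring
      rw [hxi]
      exact (IsUltrametricDist.norm_add_le_max _ _).trans (max_le (hA0le i) ((hx i).trans hδt1))
    refine ⟨hxle, ?_⟩
    have hlip : ‖MvPolynomial.aeval x D - MvPolynomial.aeval A0 D‖ ≤ δ * t :=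
      NewtonHensel.lipschitz_bound D hA0le (mul_nonneg hδpos.le ht0) hδt1 hx
    have hlt : ‖MvPolynomial.aeval x D - MvPolynomial.aeval A0 D‖ < ‖MvPolynomial.aeval A0 D‖ := by
      rw [hnormA0D]
      exact hlip.trans_lt (mul_lt_of_lt_one_right hδpos ht1)
    rw [hdetQ, NewtonHensel.norm_eq_of_sub_lt hlt, hnormA0D]
  -- main invariant
  have main : ∀ N, 1 ≤ N → (∀ i, ‖seq N i - A0 i‖ ≤ δ * t)
      ∧ (∀ i, ‖MvPolynomial.aeval (seq N) (f i)‖ ≤ δ ^ 2 * t ^ 2 ^ (N - 1)) := by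
    intro N hN
    induction N, hN using Nat.le_induction with
    | base =>
        constructor
        · intro i; rw [hseq_one]
          simp only [sub_self, norm_zero]
          exact mul_nonneg hδpos.le ht0
        · intro i
          rw [hseq_one]
          show ‖MvPolynomial.aeval A0 (f i)‖ ≤ δ ^ 2 * t ^ 2 ^ (1 - 1)
          rw [hvalA0 i, ← PadicInt.norm_def]
          simpa using (hM0le i).trans_eq hδ2t.symm
    | succ N hN ih =>
        obtain ⟨ihdist, ihval⟩ := ih
        obtain ⟨hxle, hdetN⟩ := step_props (seq N) ihdist
        have hdetne : (jacobianQ f (seq N)).det ≠ 0 := by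
          intro h; rw [h, norm_zero] at hdetN; exact hδpos.ne hdetN
        have hJentry : ∀ i k, ‖jacobianQ f (seq N) i k‖ ≤ 1 :=
          fun i k => NewtonHensel.aeval_le_one _ hxle
        have hcorr : ∀ i,
            ‖(jacobianQ f (seq N))⁻¹.mulVec (fun j => MvPolynomial.aeval (seq N) (f j)) i‖
              ≤ δ * t ^ 2 ^ (N - 1) := by
          intro i
          have hbnd := NewtonHensel.inv_mulVec_bound (jacobianQ f (seq N)) hJentry hdetne
            (b := δ ^ 2 * t ^ 2 ^ (N - 1)) (mul_nonneg (sq_nonneg δ) (pow_nonneg ht0 _)) ihval i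
          rw [hdetN] at hbnd
          refine hbnd.trans_eq ?_
          field_simp [hδpos.ne']
        have hdiffstep : ∀ k, ‖seq (N + 1) k - seq N k‖ ≤ δ * t ^ 2 ^ (N - 1) := by
          intro k
          rw [hseq_rec N hN]
          simpa using hcorr k
        have hpow_le : t ^ 2 ^ (N - 1) ≤ t := by
          calc t ^ 2 ^ (N - 1) ≤ t ^ 1 := pow_le_pow_of_le_one ht0 ht1.le Nat.one_le_two_pow
            _ = t := pow_one t
        constructor
        · intro i
          have hsplit : seq (N + 1) i - A0 i
              = (seq (N + 1) i - seq N i) + (seq N i - A0 i) := by ring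
          rw [hsplit]
          refine (IsUltrametricDist.norm_add_le_max _ _).trans (max_le ?_ (ihdist i))
          refine (hdiffstep i).trans ?_
          exact mul_le_mul_of_nonneg_left hpow_le hδpos.le
        · intro i
          have hc0 : (0:ℝ) ≤ δ * t ^ 2 ^ (N - 1) := mul_nonneg hδpos.le (pow_nonneg ht0 _)
          have hc1 : δ * t ^ 2 ^ (N - 1) ≤ 1 :=
            mul_le_one₀ hδ1 (pow_nonneg ht0 _) (pow_le_one₀ ht0 ht1.le)
          have hT := NewtonHensel.taylor_bound (f i) hxle hc0 hc1 hdiffstep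
          have hlin : ∑ k, MvPolynomial.aeval (seq N) (MvPolynomial.pderiv k (f i))
                * (seq (N + 1) k - seq N k)
              = -(MvPolynomial.aeval (seq N) (f i)) := by
            have h1 : ∀ k, seq (N + 1) k - seq N k
                = -((jacobianQ f (seq N))⁻¹.mulVec (fun j => MvPolynomial.aeval (seq N) (f j)) k) := by
              intro k; rw [hseq_rec N hN]; simp
            have h2 : (jacobianQ f (seq N)).mulVec
                ((jacobianQ f (seq N))⁻¹.mulVec (fun j => MvPolynomial.aeval (seq N) (f j)))
                = fun j => MvPolynomial.aeval (seq N) (f j) := by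
              rw [Matrix.mulVec_mulVec,
                Matrix.mul_nonsing_inv _ (isUnit_iff_ne_zero.mpr hdetne), Matrix.one_mulVec]
            calc ∑ k, jacobianQ f (seq N) i k * (seq (N + 1) k - seq N k)
                = ∑ k, jacobianQ f (seq N) i k *
                    (-((jacobianQ f (seq N))⁻¹.mulVec (fun j => MvPolynomial.aeval (seq N) (f j)) k)) :=
                  Finset.sum_congr rfl fun k _ => by rw [h1 k]
              _ = -∑ k, jacobianQ f (seq N) i k *
                    ((jacobianQ f (seq N))⁻¹.mulVec (fun j => MvPolynomial.aeval (seq N) (f j)) k) := by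
                  simp [mul_neg]
              _ = -((jacobianQ f (seq N)).mulVec
                    ((jacobianQ f (seq N))⁻¹.mulVec (fun j => MvPolynomial.aeval (seq N) (f j))) i) := rfl
              _ = -(MvPolynomial.aeval (seq N) (f i)) := by rw [h2]
          have hval : MvPolynomial.aeval (seq (N + 1)) (f i)
              = MvPolynomial.aeval (seq (N + 1)) (f i) - MvPolynomial.aeval (seq N) (f i)
                - ∑ k, MvPolynomial.aeval (seq N) (MvPolynomial.pderiv k (f i))
                    * (seq (N + 1) k - seq N k) := by
            rw [hlin]; ring
          have h2N : 2 ^ (N - 1) * 2 = 2 ^ ((N + 1) - 1) := by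
            rw [← pow_succ]; congr 1; omega
          calc ‖MvPolynomial.aeval (seq (N + 1)) (f i)‖
              = ‖MvPolynomial.aeval (seq (N + 1)) (f i) - MvPolynomial.aeval (seq N) (f i)
                - ∑ k, MvPolynomial.aeval (seq N) (MvPolynomial.pderiv k (f i))
                    * (seq (N + 1) k - seq N k)‖ := by rw [← hval]
            _ ≤ (δ * t ^ 2 ^ (N - 1)) ^ 2 := hT
            _ = δ ^ 2 * t ^ 2 ^ ((N + 1) - 1) := by
                rw [mul_pow, ← pow_mul, h2N]
  refine ⟨fun N hN => ⟨(step_props (seq N) (main N hN).1).1,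
    (step_props (seq N) (main N hN).1).2, hdet0⟩, ?_⟩
  intro α hroot hα
  set A : Fin m → ℚ_[p] := fun i => (α i : ℚ_[p]) with hA
  have hrootQ : ∀ i, MvPolynomial.aeval A (f i) = 0 := by
    intro i
    rw [hA]
    show MvPolynomial.aeval (fun j => ((α j : ℚ_[p]))) (f i) = 0
    rw [NewtonHensel.aeval_coe (f i) α, hroot i]
    simp
  have hAsub : ∀ i, ‖A i - A0 i‖ = ‖α i - a i‖ := by
    intro i
    have : A i - A0 i = ((α i - a i : ℤ_[p]) : ℚ_[p]) := by rw [hA, hA0]; push_cast; ring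
    rw [this, ← PadicInt.norm_def]
  -- base estimate
  have hbase : ∀ i, ‖A i - A0 i‖ ≤ δ * t := by
    set c₀ := Finset.univ.sup' (Finset.univ_nonempty_iff.mpr ⟨⟨0, hm⟩⟩)
      (fun k => ‖A k - A0 k‖) with hc₀def
    clear_value c₀
    have hc₀le : ∀ k, ‖A k - A0 k‖ ≤ c₀ := by
      intro k; rw [hc₀def]
      exact Finset.le_sup' (fun k => ‖A k - A0 k‖) (Finset.mem_univ k)
    have hc₀lt : c₀ < δ := by
      rw [hc₀def]
      refine (Finset.sup'_lt_iff _).mpr fun k _ => by rw [hAsub k]; exact hα k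
    have hc₀0 : 0 ≤ c₀ := (norm_nonneg _).trans (hc₀le i0)
    have hc₀1 : c₀ ≤ 1 := hc₀lt.le.trans hδ1
    have hdetA0ne : (jacobianQ f A0).det ≠ 0 := by
      intro h
      have := hdetQ A0
      rw [h] at this
      rw [← this, norm_zero] at hnormA0D
      exact hδpos.ne hnormA0D
    have hJentry : ∀ i k, ‖jacobianQ f A0 i k‖ ≤ 1 :=
      fun i k => NewtonHensel.aeval_le_one _ hA0le
    have hw : ∀ i, ‖(jacobianQ f A0).mulVec (fun k => A k - A0 k) i‖ ≤ max M0 (c₀ ^ 2) := by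
      intro i
      have hT := NewtonHensel.taylor_bound (f i) hA0le hc₀0 hc₀1 hc₀le
      have hexp : (jacobianQ f A0).mulVec (fun k => A k - A0 k) i
          = -(MvPolynomial.aeval A0 (f i))
            - (MvPolynomial.aeval A (f i) - MvPolynomial.aeval A0 (f i)
              - ∑ k, MvPolynomial.aeval A0 (MvPolynomial.pderiv k (f i)) * (A k - A0 k)) := by
        have hmv : (jacobianQ f A0).mulVec (fun k => A k - A0 k) i
            = ∑ k, MvPolynomial.aeval A0 (MvPolynomial.pderiv k (f i)) * (A k - A0 k) := rfl
        rw [hmv, hrootQ i]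
        ring
      rw [hexp]
      refine (NewtonHensel.norm_sub_le_max _ _).trans (max_le ?_ ?_)
      · rw [norm_neg, hvalA0 i, ← PadicInt.norm_def]
        exact (hM0le i).trans (le_max_left _ _)
      · exact hT.trans (le_max_right _ _)
    have hAA0 : (fun k => A k - A0 k)
        = (jacobianQ f A0)⁻¹.mulVec ((jacobianQ f A0).mulVec (fun k => A k - A0 k)) := by
      rw [Matrix.mulVec_mulVec,
        Matrix.nonsing_inv_mul _ (isUnit_iff_ne_zero.mpr hdetA0ne), Matrix.one_mulVec]
    have hbd : ∀ i, ‖A i - A0 i‖ ≤ max M0 (c₀ ^ 2) / δ := by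
      intro i
      have := NewtonHensel.inv_mulVec_bound (jacobianQ f A0) hJentry hdetA0ne
        (b := max M0 (c₀ ^ 2)) (le_max_of_le_left hM0nonneg) hw i
      rw [hdetQ A0, hnormA0D] at this
      calc ‖A i - A0 i‖
          = ‖(jacobianQ f A0)⁻¹.mulVec ((jacobianQ f A0).mulVec (fun k => A k - A0 k)) i‖ := by
            rw [← hAA0]
        _ ≤ max M0 (c₀ ^ 2) / δ := this
    have hc₀bd : c₀ ≤ max M0 (c₀ ^ 2) / δ :=
      le_trans (le_of_eq hc₀def) (Finset.sup'_le _ _ fun k _ => hbd k)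
    have hc₀final : c₀ ≤ δ * t := by
      rcases max_cases M0 (c₀ ^ 2) with ⟨hmax, _⟩ | ⟨hmax, hlt⟩
      · rw [hmax] at hc₀bd
        rw [hδt]
        exact hc₀bd
      · rw [hmax] at hc₀bd
        -- c₀ ≤ c₀^2/δ forces c₀ = 0
        have hkey : c₀ * δ ≤ c₀ ^ 2 := (le_div_iff₀ hδpos).mp hc₀bd
        rcases eq_or_lt_of_le hc₀0 with h0 | h0
        · rw [← h0]; exact mul_nonneg hδpos.le ht0
        · nlinarith [mul_pos h0 (sub_pos.mpr hc₀lt)]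
    exact fun i => (hc₀le i).trans hc₀final
  -- part-2 induction
  have main2 : ∀ N, 1 ≤ N → ∀ i, ‖A i - seq N i‖ ≤ δ * t ^ 2 ^ (N - 1) := by
    intro N hN
    induction N, hN using Nat.le_induction with
    | base =>
        intro i
        rw [hseq_one]
        simpa using hbase i
    | succ N hN ih =>
        have hd := (main N hN).1
        obtain ⟨hxle, hdetN⟩ := step_props (seq N) hd
        have hdetne : (jacobianQ f (seq N)).det ≠ 0 := by
          intro h; rw [h, norm_zero] at hdetN; exact hδpos.ne hdetN
        have hJentry : ∀ i k, ‖jacobianQ f (seq N) i k‖ ≤ 1 :=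
          fun i k => NewtonHensel.aeval_le_one _ hxle
        have hc0 : (0:ℝ) ≤ δ * t ^ 2 ^ (N - 1) := mul_nonneg hδpos.le (pow_nonneg ht0 _)
        have hc1 : δ * t ^ 2 ^ (N - 1) ≤ 1 :=
          mul_le_one₀ hδ1 (pow_nonneg ht0 _) (pow_le_one₀ ht0 ht1.le)
        set w : Fin m → ℚ_[p] := fun i =>
          MvPolynomial.aeval A (f i) - MvPolynomial.aeval (seq N) (f i)
            - ∑ k, MvPolynomial.aeval (seq N) (MvPolynomial.pderiv k (f i)) * (A k - seq N k)
          with hwdef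
        have hwbd : ∀ i, ‖w i‖ ≤ (δ * t ^ 2 ^ (N - 1)) ^ 2 :=
          fun i => NewtonHensel.taylor_bound (f i) hxle hc0 hc1 ih
        have hvec : (jacobianQ f (seq N)).mulVec (fun k => A k - seq N k)
            = fun i => -(MvPolynomial.aeval (seq N) (f i)) - w i := by
          funext i
          have hmv : (jacobianQ f (seq N)).mulVec (fun k => A k - seq N k) i
              = ∑ k, MvPolynomial.aeval (seq N) (MvPolynomial.pderiv k (f i)) * (A k - seq N k) :=
            rfl
          rw [hmv]
          simp only [hwdef]
          rw [hrootQ i]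
          ring
        have hAseq : (fun k => A k - seq N k)
            = (jacobianQ f (seq N))⁻¹.mulVec
                (fun i => -(MvPolynomial.aeval (seq N) (f i)) - w i) := by
          rw [← hvec, Matrix.mulVec_mulVec,
            Matrix.nonsing_inv_mul _ (isUnit_iff_ne_zero.mpr hdetne), Matrix.one_mulVec]
        have hsplitvec : (fun i => -(MvPolynomial.aeval (seq N) (f i)) - w i)
            = (-(fun j => MvPolynomial.aeval (seq N) (f j)) - w) := rfl
        intro i
        have hfinal : A i - seq (N + 1) i = -((jacobianQ f (seq N))⁻¹.mulVec w i) := by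
          have h1 : A i - seq N i
              = (jacobianQ f (seq N))⁻¹.mulVec
                  (fun i => -(MvPolynomial.aeval (seq N) (f i)) - w i) i := congrFun hAseq i
          have h2 : (jacobianQ f (seq N))⁻¹.mulVec
                (fun i => -(MvPolynomial.aeval (seq N) (f i)) - w i) i
              = -((jacobianQ f (seq N))⁻¹.mulVec (fun j => MvPolynomial.aeval (seq N) (f j)) i)
                - (jacobianQ f (seq N))⁻¹.mulVec w i := by
            rw [hsplitvec, Matrix.mulVec_sub, Matrix.mulVec_neg]
            simp
          rw [hseq_rec N hN]
          simp only [Pi.sub_apply]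
          have := h1.trans h2
          linear_combination this
        rw [hfinal, norm_neg]
        have hbnd := NewtonHensel.inv_mulVec_bound (jacobianQ f (seq N)) hJentry hdetne
          (b := (δ * t ^ 2 ^ (N - 1)) ^ 2) (sq_nonneg _) hwbd i
        rw [hdetN] at hbnd
        refine hbnd.trans_eq ?_
        have h2N : 2 ^ (N - 1) * 2 = 2 ^ ((N + 1) - 1) := by
          rw [← pow_succ]; congr 1; omega
        rw [mul_pow, ← pow_mul, h2N]
        field_simp [hδpos.ne']
  refine ⟨main2, ?_⟩
  -- convergence
  rw [tendsto_pi_nhds]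
  intro i
  rw [tendsto_iff_dist_tendsto_zero]
  have hb : Filter.Tendsto (fun N : ℕ => δ * t ^ (N - 1)) Filter.atTop (nhds 0) := by
    have h1 : Filter.Tendsto (fun N : ℕ => t ^ N) Filter.atTop (nhds 0) :=
      tendsto_pow_atTop_nhds_zero_of_lt_one ht0 ht1
    have h2 : Filter.Tendsto (fun N : ℕ => N - 1) Filter.atTop Filter.atTop :=
      Filter.tendsto_sub_atTop_nat 1
    have := (h1.comp h2).const_mul δ
    simpa using this
  refine squeeze_zero' (Filter.Eventually.of_forall fun N => dist_nonneg) ?_ hb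
  filter_upwards [Filter.eventually_ge_atTop 1] with N hN
  have hdist : dist (seq N i) (A i) = ‖A i - seq N i‖ := by
    rw [dist_eq_norm, ← norm_neg]
    congr 1
    ring
  rw [hdist]
  refine (main2 N hN i).trans ?_
  have hle : t ^ 2 ^ (N - 1) ≤ t ^ (N - 1) :=
    pow_le_pow_of_le_one ht0 ht1.le (Nat.lt_two_pow_self).le
  exact mul_le_mul_of_nonneg_left hle hδpos.le
end
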